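/- Let T : H₁ → H₂ and S : H₂ → H₃ be closed, densely defined linear operators between Hilbert spaces with Im T ⊆ Ker S, and suppose there is a constant C > 0 such that ‖g‖²_{H₂} ≤ C(‖T*g‖²_{H₁} + ‖Sg‖²_{H₃}) for all g ∈ Dom(S) ∩ Dom(T*). Then for each f ∈ Ker S there is u ∈ H₁ with Tu = f and ‖u‖²_{H₁} ≤ C‖f‖²_{H₂}. -/

import Mathlib

/-- **Hörmander's `L²`-existence lemma (variant of the Riesz representation
theorem).**
Let `T : H₁ → H₂` and `S : H₂ → H₃` be closed, densely defined linear operators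
between Hilbert spaces with `Im T ⊆ Ker S`, and suppose there is a constant
`C > 0` such that `‖g‖²_{H₂} ≤ C(‖T*g‖²_{H₁} + ‖Sg‖²_{H₃})` for all
`g ∈ Dom(S) ∩ Dom(T*)`.  Then for each `f ∈ Ker S` there is `u ∈ H₁` with
`Tu = f` and `‖u‖²_{H₁} ≤ C‖f‖²_{H₂}`. -/
theorem hormander_l2_existence
    {𝕜 : Type*} [RCLike 𝕜] {H₁ H₂ H₃ : Type*}
    [NormedAddCommGroup H₁] [InnerProductSpace 𝕜 H₁] [CompleteSpace H₁]
    [NormedAddCommGroup H₂] [InnerProductSpace 𝕜 H₂] [CompleteSpace H₂]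
    [NormedAddCommGroup H₃] [InnerProductSpace 𝕜 H₃] [CompleteSpace H₃]
    (T : H₁ →ₗ.[𝕜] H₂) (S : H₂ →ₗ.[𝕜] H₃)
    (hT_closed : T.IsClosed) (hT_dense : Dense (T.domain : Set H₁))
    (hS_closed : S.IsClosed) (hS_dense : Dense (S.domain : Set H₂))
    (hTS : ∀ x : T.domain, ∃ h : (T x : H₂) ∈ S.domain, S ⟨T x, h⟩ = 0)
    (C : ℝ) (hC : 0 < C)
    (hest : ∀ (g : H₂) (hg₁ : g ∈ S.domain) (hg₂ : g ∈ T.adjoint.domain),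
      ‖g‖ ^ 2 ≤ C * (‖T.adjoint ⟨g, hg₂⟩‖ ^ 2 + ‖S ⟨g, hg₁⟩‖ ^ 2))
    (f : H₂) (hf : f ∈ S.domain) (hf0 : S ⟨f, hf⟩ = 0) :
    ∃ u : H₁, ∃ hu : u ∈ T.domain, T ⟨u, hu⟩ = f ∧ ‖u‖ ^ 2 ≤ C * ‖f‖ ^ 2 := by
  set A := T.adjoint with hA
  -- the kernel of `S` as a closed submodule of `H₂`
  set K : Submodule 𝕜 H₂ := S.graph.comap (LinearMap.inl 𝕜 H₂ H₃) with hKdef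
  have hKmem : ∀ g : H₂, g ∈ K ↔ ∃ hg : g ∈ S.domain, S ⟨g, hg⟩ = 0 := by
    intro g
    simp only [hKdef, Submodule.mem_comap, LinearMap.inl_apply, LinearPMap.mem_graph_iff]
    constructor
    · rintro ⟨⟨y, hy⟩, h1, h2⟩
      subst h1
      exact ⟨hy, h2⟩
    · rintro ⟨hg, h0⟩
      exact ⟨⟨g, hg⟩, rfl, h0⟩
  have hKclosed : IsClosed (K : Set H₂) := by
    have : (K : Set H₂) = (fun g : H₂ => (g, (0 : H₃))) ⁻¹' (S.graph : Set (H₂ × H₃)) := by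
      ext g; simp [hKdef]
    rw [this]
    exact hS_closed.preimage (by fun_prop)
  haveI : CompleteSpace K := hKclosed.completeSpace_coe
  have hfK : f ∈ K := (hKmem f).2 ⟨hf, hf0⟩
  -- elements of `Kᗮ` belong to the domain of the adjoint and are annihilated by it
  have horth : ∀ g, g ∈ Kᗮ → ∃ hg : g ∈ A.domain, A ⟨g, hg⟩ = 0 := by
    intro g hg
    have hg' : ∀ x : T.domain, (inner 𝕜 ((0 : H₁)) ((x : H₁)) : 𝕜) = (inner 𝕜 (g) (T x) : 𝕜) := by
      intro x
      have hTx : (T x : H₂) ∈ K := (hKmem _).2 (hTS x)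
      rw [inner_zero_left, eq_comm]
      exact Submodule.inner_left_of_mem_orthogonal hTx hg
    have hgd : g ∈ A.domain := LinearPMap.mem_adjoint_domain_of_exists _ ⟨0, hg'⟩
    exact ⟨hgd, LinearPMap.adjoint_apply_eq hT_dense _ hg'⟩
  -- the key estimate
  have key : ∀ (g : H₂) (hg : g ∈ A.domain),
      ‖(inner 𝕜 (f) (g) : 𝕜)‖ ≤ Real.sqrt C * ‖f‖ * ‖A ⟨g, hg⟩‖ := by
    intro g hg
    set g₁ : H₂ := (K.orthogonalProjectionOnto g : H₂) with hg₁def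
    have hg₁K : g₁ ∈ K := (K.orthogonalProjectionOnto g).2
    have hg₂o : g - g₁ ∈ Kᗮ := K.sub_starProjection_mem_orthogonal g
    obtain ⟨hg₂d, hg₂0⟩ := horth _ hg₂o
    obtain ⟨hg₁S, hg₁0⟩ := (hKmem g₁).1 hg₁K
    have hg₁d : g₁ ∈ A.domain := by
      have h : g₁ = g - (g - g₁) := by abel
      rw [h]
      exact A.domain.sub_mem hg hg₂d
    have hAg₁ : A ⟨g₁, hg₁d⟩ = A ⟨g, hg⟩ := by
      have h : (⟨g₁, hg₁d⟩ : A.domain) = ⟨g, hg⟩ - ⟨g - g₁, hg₂d⟩ := by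
        ext; simp
      rw [h, LinearPMap.map_sub, hg₂0, sub_zero]
    have h1 : ‖g₁‖ ^ 2 ≤ C * ‖A ⟨g, hg⟩‖ ^ 2 := by
      have h := hest g₁ hg₁S hg₁d
      rw [hg₁0, hAg₁] at h
      simpa using h
    have hg₁n : ‖g₁‖ ≤ Real.sqrt C * ‖A ⟨g, hg⟩‖ := by
      have h2 : Real.sqrt (‖g₁‖ ^ 2) ≤ Real.sqrt (C * ‖A ⟨g, hg⟩‖ ^ 2) :=
        Real.sqrt_le_sqrt h1
      rw [Real.sqrt_sq (norm_nonneg _), Real.sqrt_mul hC.le,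
        Real.sqrt_sq (norm_nonneg _)] at h2
      exact h2
    have hfg : (inner 𝕜 (f) (g) : 𝕜) = (inner 𝕜 (f) (g₁) : 𝕜) := by
      have h := Submodule.inner_right_of_mem_orthogonal hfK hg₂o
      rw [inner_sub_right, sub_eq_zero] at h
      exact h
    rw [hfg]
    calc ‖(inner 𝕜 (f) (g₁) : 𝕜)‖ ≤ ‖f‖ * ‖g₁‖ := norm_inner_le_norm _ _
      _ ≤ ‖f‖ * (Real.sqrt C * ‖A ⟨g, hg⟩‖) := by
          exact mul_le_mul_of_nonneg_left hg₁n (norm_nonneg f)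
      _ = Real.sqrt C * ‖f‖ * ‖A ⟨g, hg⟩‖ := by ring
  -- construct the functional on the range of the adjoint and extend it
  set β : A.domain →ₗ[𝕜] H₁ := A.toFun with hβ
  set α : A.domain →ₗ[𝕜] 𝕜 := (innerₛₗ 𝕜 f).comp A.domain.subtype with hα
  have hαval : ∀ g : A.domain, α g = (inner 𝕜 (f) ((g : H₂)) : 𝕜) := fun _ => rfl
  have hβval : ∀ g : A.domain, β g = A g := fun _ => rfl
  have hker : LinearMap.ker β ≤ LinearMap.ker α := by
    intro g hg
    rw [LinearMap.mem_ker] at hg ⊢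
    have h := key g g.2
    rw [show (⟨(g : H₂), g.2⟩ : A.domain) = g from rfl] at h
    rw [← hβval, hg, norm_zero, mul_zero] at h
    rw [hαval]
    exact norm_le_zero_iff.mp h
  set φ₀ : LinearMap.range β →ₗ[𝕜] 𝕜 :=
    (Submodule.liftQ (LinearMap.ker β) α hker).comp
      (β.quotKerEquivRange.symm : LinearMap.range β →ₗ[𝕜] A.domain ⧸ LinearMap.ker β) with hφ₀def
  have hφ₀ : ∀ g : A.domain, φ₀ ⟨β g, LinearMap.mem_range_self β g⟩ = α g := by
    intro g
    have h1 : β.quotKerEquivRange (Submodule.Quotient.mk g)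
        = ⟨β g, LinearMap.mem_range_self β g⟩ :=
      Subtype.ext (β.quotKerEquivRange_apply_mk g)
    rw [hφ₀def]
    simp only [LinearMap.coe_comp, Function.comp_apply, LinearEquiv.coe_coe, ← h1,
      LinearEquiv.symm_apply_apply, Submodule.liftQ_apply]
  have hφ₀bound : ∀ r : LinearMap.range β, ‖φ₀ r‖ ≤ Real.sqrt C * ‖f‖ * ‖(r : H₁)‖ := by
    rintro ⟨r, g, rfl⟩
    rw [hφ₀, hαval]
    have h := key g g.2
    rw [show (⟨(g : H₂), g.2⟩ : A.domain) = g from rfl] at h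
    exact h
  set φ₀C : LinearMap.range β →L[𝕜] 𝕜 := φ₀.mkContinuous _ hφ₀bound with hφ₀C
  obtain ⟨Φ, hΦext, hΦnorm⟩ := exists_extension_norm_eq (LinearMap.range β) φ₀C
  set u := (InnerProductSpace.toDual 𝕜 H₁).symm Φ with hu
  have hu_inner : ∀ g : A.domain, (inner 𝕜 (u) (A g) : 𝕜) = (inner 𝕜 (f) ((g : H₂)) : 𝕜) := by
    intro g
    rw [hu, InnerProductSpace.toDual_symm_apply, ← hβval g]
    have := hΦext ⟨β g, LinearMap.mem_range_self β g⟩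
    rw [this, hφ₀C]
    rw [show φ₀.mkContinuous _ hφ₀bound ⟨β g, LinearMap.mem_range_self β g⟩
      = φ₀ ⟨β g, LinearMap.mem_range_self β g⟩ from rfl, hφ₀, hαval]
  have hu_norm : ‖u‖ ≤ Real.sqrt C * ‖f‖ := by
    have h1 : ‖u‖ = ‖Φ‖ := LinearIsometryEquiv.norm_map _ _
    rw [h1, hΦnorm]
    exact φ₀.mkContinuous_norm_le (by positivity) hφ₀bound
  -- show `(u, f)` lies in the (closed) graph of `T`
  set e : WithLp 2 (H₁ × H₂) ≃L[𝕜] H₁ × H₂ := WithLp.prodContinuousLinearEquiv 2 𝕜 H₁ H₂ with he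
  set G : Submodule 𝕜 (WithLp 2 (H₁ × H₂)) :=
    T.graph.comap (e.toLinearEquiv : WithLp 2 (H₁ × H₂) →ₗ[𝕜] H₁ × H₂) with hG
  have hGmem : ∀ w : WithLp 2 (H₁ × H₂), w ∈ G ↔ e w ∈ T.graph := fun w => Iff.rfl
  have hGclosed : IsClosed (G : Set (WithLp 2 (H₁ × H₂))) := by
    have : (G : Set (WithLp 2 (H₁ × H₂))) = ⇑e ⁻¹' (T.graph : Set (H₁ × H₂)) := rfl
    rw [this]
    exact hT_closed.preimage e.continuous
  haveI : CompleteSpace G := hGclosed.completeSpace_coe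
  set v : WithLp 2 (H₁ × H₂) := e.symm (u, f) with hv
  set q : WithLp 2 (H₁ × H₂) := v - (G.orthogonalProjectionOnto v : WithLp 2 (H₁ × H₂)) with hq
  have hqo : q ∈ Gᗮ := G.sub_starProjection_mem_orthogonal v
  set a : H₁ := (e q).1 with ha
  set b : H₂ := (e q).2 with hb
  have hab : ∀ x : T.domain, (inner 𝕜 (a) ((x : H₁)) : 𝕜) + (inner 𝕜 (b) (T x) : 𝕜) = 0 := by
    intro x
    have hxG : e.symm ((x : H₁), T x) ∈ G := by
      rw [hGmem, ContinuousLinearEquiv.apply_symm_apply]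
      exact T.mem_graph x
    have h := Submodule.inner_left_of_mem_orthogonal hxG hqo
    rw [WithLp.prod_inner_apply] at h
    exact h
  have hbdom : b ∈ A.domain := by
    refine LinearPMap.mem_adjoint_domain_of_exists _ ⟨-a, fun x => ?_⟩
    rw [inner_neg_left, eq_comm, ← add_eq_zero_iff_eq_neg', hab x]
  have hAb : A ⟨b, hbdom⟩ = -a := by
    refine LinearPMap.adjoint_apply_eq hT_dense _ fun x => ?_
    rw [inner_neg_left, eq_comm, ← add_eq_zero_iff_eq_neg', hab x]
  have hqv : (inner 𝕜 (q) (v) : 𝕜) = 0 := by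
    rw [WithLp.prod_inner_apply]
    have hvf : (WithLp.ofLp (v : WithLp 2 (H₁ × H₂))).1 = u := rfl
    have hvs : (WithLp.ofLp (v : WithLp 2 (H₁ × H₂))).2 = f := rfl
    rw [hvf, hvs]
    have h0 := hu_inner ⟨b, hbdom⟩
    rw [hAb] at h0
    have h1 : (inner 𝕜 (b) (f) : 𝕜) = (inner 𝕜 ((-a : H₁)) (u) : 𝕜) := by
      rw [← inner_conj_symm b f, ← h0, inner_conj_symm]
    show (inner 𝕜 (a) (u) : 𝕜) + (inner 𝕜 (b) (f) : 𝕜) = 0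
    rw [h1, inner_neg_left]
    ring
  have hq0 : q = 0 := by
    have h2 : (inner 𝕜 (q) (q) : 𝕜) = 0 := by
      have hPq : (inner 𝕜 (q) ((G.orthogonalProjectionOnto v : WithLp 2 (H₁ × H₂))) : 𝕜) = 0 :=
        Submodule.inner_left_of_mem_orthogonal (G.orthogonalProjectionOnto v).2 hqo
      have hdecomp : (q : WithLp 2 (H₁ × H₂))
          = v - (G.orthogonalProjectionOnto v : WithLp 2 (H₁ × H₂)) := rfl
      calc (inner 𝕜 (q) (q) : 𝕜) = (inner 𝕜 (q) (v) : 𝕜) - (inner 𝕜 (q) ((G.orthogonalProjectionOnto v : WithLp 2 (H₁ × H₂))) : 𝕜) := by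
            rw [hdecomp, inner_sub_right]
        _ = 0 := by rw [hqv, hPq, sub_zero]
    exact inner_self_eq_zero.mp h2
  have hvG : v ∈ G := by
    have : v = (G.orthogonalProjectionOnto v : WithLp 2 (H₁ × H₂)) := by
      have := sub_eq_zero.mp hq0
      exact this
    rw [this]
    exact (G.orthogonalProjectionOnto v).2
  have hgraph : ((u, f) : H₁ × H₂) ∈ T.graph := by
    have := (hGmem v).1 hvG
    rwa [hv, ContinuousLinearEquiv.apply_symm_apply] at this
  rw [LinearPMap.mem_graph_iff] at hgraph
  obtain ⟨y, hy1, hy2⟩ := hgraph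
  have hy1' : (y : H₁) = u := hy1
  have hud : u ∈ T.domain := hy1' ▸ y.2
  refine ⟨u, hud, ?_, ?_⟩
  · have h3 : (⟨u, hud⟩ : T.domain) = y := Subtype.ext hy1'.symm
    rw [h3]
    exact hy2
  · calc ‖u‖ ^ 2 ≤ (Real.sqrt C * ‖f‖) ^ 2 := by
          exact pow_le_pow_left₀ (norm_nonneg u) hu_norm 2
      _ = C * ‖f‖ ^ 2 := by
          rw [mul_pow, Real.sq_sqrt hC.le]
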